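/- A Hermitian matrix X ∈ Mat_n(ℂ) is an abelian self-commutator in Mat_n(ℂ) (i.e. there exists Y ∈ Mat_n(ℂ) with (Y Y*)(Y* Y) = (Y* Y)(Y Y*) and X = Y Y* − Y* Y) if and only if trace(X) = 0. -/
import Mathlib
open scoped Matrix
open Finset

/-- Partial sums of a monotone tuple with total sum zero are nonpositive. -/
lemma sorted_partial_sum_nonpos {n : ℕ} (d : Fin n → ℝ) (hm : Monotone d)
    (h0 : ∑ i, d i = 0) (m : ℕ) :
    ∑ i ∈ Finset.univ.filter (fun i : Fin n => (i : ℕ) < m), d i ≤ 0 := by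
  rcases Nat.eq_zero_or_pos n with hn | hn
  · subst hn; simp
  set A := Finset.univ.filter (fun i : Fin n => (i : ℕ) < m) with hA
  set B := Finset.univ.filter (fun i : Fin n => ¬ (i : ℕ) < m) with hB
  have hab : ∑ i ∈ A, d i + ∑ i ∈ B, d i = 0 := by
    rw [hA, hB, Finset.sum_filter_add_sum_filter_not]; exact h0
  have key : ∀ i ∈ A, ∀ j ∈ B, d i ≤ d j := by
    intro i hi j hj
    simp only [hA, hB, Finset.mem_filter, Finset.mem_univ, true_and] at hi hj
    exact hm (by rw [Fin.le_def]; omega)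
  have h1 : ∀ i ∈ A, (B.card : ℝ) * d i ≤ ∑ j ∈ B, d j := by
    intro i hi
    calc (B.card : ℝ) * d i = ∑ _j ∈ B, d i := by rw [Finset.sum_const, nsmul_eq_mul]
    _ ≤ ∑ j ∈ B, d j := Finset.sum_le_sum (fun j hj => key i hi j hj)
  have h2 : (B.card : ℝ) * (∑ i ∈ A, d i) ≤ (A.card : ℝ) * (∑ j ∈ B, d j) := by
    calc (B.card : ℝ) * ∑ i ∈ A, d i = ∑ i ∈ A, (B.card : ℝ) * d i := by rw [Finset.mul_sum]
    _ ≤ ∑ i ∈ A, ∑ j ∈ B, d j := Finset.sum_le_sum h1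
    _ = (A.card : ℝ) * ∑ j ∈ B, d j := by rw [Finset.sum_const, nsmul_eq_mul]
  have hcard : A.card + B.card = n := by
    rw [hA, hB, Finset.card_filter_add_card_filter_not, Finset.card_univ, Fintype.card_fin]
  have hBa : ∑ j ∈ B, d j = -∑ i ∈ A, d i := by linarith
  rw [hBa] at h2
  have hn' : (0 : ℝ) < (A.card : ℝ) + (B.card : ℝ) := by
    have : (0:ℝ) < (n:ℝ) := by exact_mod_cast hn
    rw [← Nat.cast_add, hcard]; exact this
  nlinarith [h2, hn']

lemma exists_shift {n : ℕ} (d : Fin n → ℝ) (hm : Monotone d) (h0 : ∑ i, d i = 0) :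
    ∃ A : Matrix (Fin n) (Fin n) ℂ,
      (A * Aᴴ) * (Aᴴ * A) = (Aᴴ * A) * (A * Aᴴ) ∧
      A * Aᴴ - Aᴴ * A = Matrix.diagonal (fun i => (d i : ℂ)) := by
  classical
  set S : ℕ → ℝ := fun m => -(∑ i ∈ Finset.univ.filter (fun i : Fin n => (i : ℕ) < m), d i)
    with hS
  have hSpos : ∀ m, 0 ≤ S m := fun m => by
    rw [hS]; simpa using sorted_partial_sum_nonpos d hm h0 m
  have hS0 : S 0 = 0 := by simp [hS]
  have hSn : ∀ m, n ≤ m → S m = 0 := by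
    intro m hmn
    have : Finset.univ.filter (fun i : Fin n => (i : ℕ) < m) = Finset.univ := by
      apply Finset.filter_true_of_mem; intro i _; exact lt_of_lt_of_le i.isLt hmn
    simp [hS, this, h0]
  have hSstep : ∀ i : Fin n, S ((i : ℕ) + 1) = S (i : ℕ) - d i := by
    intro i
    have hfil : Finset.univ.filter (fun k : Fin n => (k : ℕ) < (i : ℕ) + 1)
        = insert i (Finset.univ.filter (fun k : Fin n => (k : ℕ) < (i : ℕ))) := by
      ext k
      simp only [Finset.mem_filter, Finset.mem_univ, true_and, Finset.mem_insert]
      constructor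
      · intro hk
        rcases Nat.lt_succ_iff_lt_or_eq.mp hk with h | h
        · exact Or.inr h
        · exact Or.inl (Fin.ext h)
      · rintro (rfl | hk)
        · omega
        · omega
    have hnot : i ∉ Finset.univ.filter (fun k : Fin n => (k : ℕ) < (i : ℕ)) := by simp
    rw [hS]
    simp only [hfil, Finset.sum_insert hnot]
    ring
  set c : ℕ → ℝ := fun m => Real.sqrt (S m) with hc
  have hcsq : ∀ m, c m * c m = S m := fun m => Real.mul_self_sqrt (hSpos m)
  set A : Matrix (Fin n) (Fin n) ℂ :=
    Matrix.of fun i j : Fin n => if (i : ℕ) = (j : ℕ) + 1 then ((c ((j : ℕ) + 1) : ℝ) : ℂ) else 0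
    with hA
  have h1 : A * Aᴴ = Matrix.diagonal (fun i : Fin n => ((S (i : ℕ) : ℝ) : ℂ)) := by
    ext i j
    rw [Matrix.mul_apply, Matrix.diagonal_apply]
    simp only [Matrix.conjTranspose_apply, hA, Matrix.of_apply]
    by_cases hij : i = j
    · subst hij
      simp only [if_pos rfl]
      by_cases hi : (i : ℕ) = 0
      · rw [Finset.sum_eq_zero, hi, hS0]
        · simp
        · intro k _
          rw [if_neg (by omega), zero_mul]
      · have hplt : (i : ℕ) - 1 < n := by have := i.isLt; omega
        rw [Finset.sum_eq_single (⟨(i : ℕ) - 1, hplt⟩ : Fin n)]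
        · simp only [Fin.val_mk]
          have heq : ((i : ℕ) - 1) + 1 = (i : ℕ) := by omega
          rw [if_pos (heq.symm), heq]
          simp [RCLike.star_def, Complex.conj_ofReal, ← Complex.ofReal_mul, hcsq]
        · intro k _ hk
          rw [if_neg, zero_mul]
          intro hcon
          exact hk (Fin.ext (by simp only [Fin.val_mk]; omega))
        · intro h; exact absurd (Finset.mem_univ _) h
    · rw [if_neg hij, Finset.sum_eq_zero]
      intro k _
      by_cases h1 : (i : ℕ) = (k : ℕ) + 1
      · by_cases h2 : (j : ℕ) = (k : ℕ) + 1
        · exact absurd (Fin.ext (h1.trans h2.symm)) hij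
        · rw [if_neg h2, star_zero, mul_zero]
      · rw [if_neg h1, zero_mul]
  have h2 : Aᴴ * A = Matrix.diagonal (fun i : Fin n => ((S ((i : ℕ) + 1) : ℝ) : ℂ)) := by
    ext i j
    rw [Matrix.mul_apply, Matrix.diagonal_apply]
    simp only [Matrix.conjTranspose_apply, hA, Matrix.of_apply]
    by_cases hij : i = j
    · subst hij
      simp only [if_pos rfl]
      by_cases hi : (i : ℕ) + 1 < n
      · rw [Finset.sum_eq_single (⟨(i : ℕ) + 1, hi⟩ : Fin n)]
        · simp only [Fin.val_mk]
          simp [RCLike.star_def, Complex.conj_ofReal, ← Complex.ofReal_mul, hcsq]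
        · intro k _ hk
          by_cases h1 : (k : ℕ) = (i : ℕ) + 1
          · exact absurd (Fin.ext (by simp only [Fin.val_mk]; omega)) hk
          · rw [if_neg h1, mul_zero]
        · intro h; exact absurd (Finset.mem_univ _) h
      · rw [Finset.sum_eq_zero, hSn ((i : ℕ) + 1) (by omega)]
        · simp
        · intro k _
          rw [if_neg (by omega), mul_zero]
    · rw [if_neg hij, Finset.sum_eq_zero]
      intro k _
      by_cases h1 : (k : ℕ) = (i : ℕ) + 1
      · by_cases h2 : (k : ℕ) = (j : ℕ) + 1
        · exact absurd (Fin.ext (by omega : (i : ℕ) = (j : ℕ))) hij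
        · rw [if_neg h2, mul_zero]
      · rw [if_neg h1, star_zero, zero_mul]
  refine ⟨A, ?_, ?_⟩
  · rw [h1, h2, Matrix.diagonal_mul_diagonal, Matrix.diagonal_mul_diagonal]
    have hcomm : (fun i : Fin n => ((S (i : ℕ) : ℝ) : ℂ) * ((S ((i : ℕ) + 1) : ℝ) : ℂ))
        = fun i : Fin n => ((S ((i : ℕ) + 1) : ℝ) : ℂ) * ((S (i : ℕ) : ℝ) : ℂ) := by
      funext i; ring
    rw [hcomm]
  · rw [h1, h2, Matrix.diagonal_sub]
    have hd : (fun i : Fin n => ((S (i : ℕ) : ℝ) : ℂ) - ((S ((i : ℕ) + 1) : ℝ) : ℂ))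
        = fun i : Fin n => ((d i : ℝ) : ℂ) := by
      funext i
      rw [← Complex.ofReal_sub, hSstep i]
      norm_num
    rw [hd]

/-- A Hermitian matrix `X ∈ Mat_n(ℂ)` is an abelian self-commutator if and
only if `trace X = 0`. -/
theorem hermitian_abelian_self_commutator_iff_trace_zero
    (n : ℕ) (X : Matrix (Fin n) (Fin n) ℂ) (hX : X.IsHermitian) :
    (∃ Y : Matrix (Fin n) (Fin n) ℂ,
      (Y * Yᴴ) * (Yᴴ * Y) = (Yᴴ * Y) * (Y * Yᴴ) ∧
      X = Y * Yᴴ - Yᴴ * Y) ↔ X.trace = 0 := by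
  constructor
  · rintro ⟨Y, -, rfl⟩
    rw [Matrix.trace_sub, Matrix.trace_mul_comm, sub_self]
  · intro htr
    set U : Matrix (Fin n) (Fin n) ℂ := (hX.eigenvectorUnitary : Matrix (Fin n) (Fin n) ℂ)
      with hUdef
    have hU1 : star U * U = 1 := Matrix.mem_unitaryGroup_iff'.mp hX.eigenvectorUnitary.2
    have hU2 : U * star U = 1 := Matrix.mem_unitaryGroup_iff.mp hX.eigenvectorUnitary.2
    set ev : Fin n → ℝ := hX.eigenvalues with hevdef
    have hspec : X = U * Matrix.diagonal (RCLike.ofReal ∘ ev) * star U := hX.spectral_theorem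
    have htrace : X.trace = ∑ i, (ev i : ℂ) := by
      calc X.trace = (U * Matrix.diagonal (RCLike.ofReal ∘ ev) * star U).trace := by rw [← hspec]
      _ = (star U * (U * Matrix.diagonal (RCLike.ofReal ∘ ev))).trace :=
            Matrix.trace_mul_comm _ _
      _ = (star U * U * Matrix.diagonal (RCLike.ofReal ∘ ev)).trace := by rw [mul_assoc]
      _ = (Matrix.diagonal (RCLike.ofReal ∘ ev)).trace := by rw [hU1, one_mul]
      _ = ∑ i, (ev i : ℂ) := by rw [Matrix.trace_diagonal]; rfl
    have hev : ∑ i, ev i = 0 := by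
      have h : ((∑ i, ev i : ℝ) : ℂ) = 0 := by
        push_cast
        rw [← htrace]
        exact htr
      exact_mod_cast h
    set σ : Equiv.Perm (Fin n) := Tuple.sort ev with hσdef
    set d : Fin n → ℝ := ev ∘ σ with hddef
    have hm : Monotone d := Tuple.monotone_sort ev
    have hd0 : ∑ i, d i = 0 := (Equiv.sum_comp σ ev).trans hev
    obtain ⟨A, hAcomm, hAdiff⟩ := exists_shift d hm hd0
    set W : Matrix (Fin n) (Fin n) ℂ := Matrix.of fun i j => U i (σ j) with hWdef
    have hW1 : Wᴴ * W = 1 := by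
      ext i j
      calc (Wᴴ * W) i j = ∑ k, star (U k (σ i)) * U k (σ j) := by
            simp [Matrix.mul_apply, Matrix.conjTranspose_apply, hWdef]
      _ = (star U * U) (σ i) (σ j) := by
            simp [Matrix.mul_apply, Matrix.star_eq_conjTranspose, Matrix.conjTranspose_apply]
      _ = (1 : Matrix (Fin n) (Fin n) ℂ) (σ i) (σ j) := by rw [hU1]
      _ = (1 : Matrix (Fin n) (Fin n) ℂ) i j := by
            simp [Matrix.one_apply, Equiv.apply_eq_iff_eq]
    have hXW : X = W * Matrix.diagonal (fun i => (d i : ℂ)) * Wᴴ := by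
      conv_lhs => rw [hspec]
      ext i j
      calc ((U * Matrix.diagonal (RCLike.ofReal ∘ ev) * star U : Matrix (Fin n) (Fin n) ℂ)) i j
          = ∑ k, U i k * (ev k : ℂ) * star (U j k) := by
            rw [Matrix.mul_apply]
            simp [Matrix.mul_diagonal, Matrix.star_eq_conjTranspose,
              Matrix.conjTranspose_apply, Function.comp]
      _ = ∑ k, U i (σ k) * (ev (σ k) : ℂ) * star (U j (σ k)) :=
            (Fintype.sum_equiv σ _ _ (fun k => rfl)).symm
      _ = ((W * Matrix.diagonal (fun i => (d i : ℂ)) * Wᴴ : Matrix (Fin n) (Fin n) ℂ)) i j := by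
            rw [Matrix.mul_apply]
            simp [Matrix.mul_diagonal, Matrix.conjTranspose_apply, hWdef, hddef,
              Function.comp]
    have key : ∀ M N : Matrix (Fin n) (Fin n) ℂ,
        (W * M * Wᴴ) * (W * N * Wᴴ) = W * (M * N) * Wᴴ := by
      intro M N
      calc (W * M * Wᴴ) * (W * N * Wᴴ) = W * M * (Wᴴ * W) * (N * Wᴴ) := by
            simp only [mul_assoc]
      _ = W * (M * N) * Wᴴ := by
            rw [hW1, mul_one]
            simp only [mul_assoc]
    have hYH : (W * A * Wᴴ)ᴴ = W * Aᴴ * Wᴴ := by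
      simp [Matrix.conjTranspose_mul, Matrix.mul_assoc]
    refine ⟨W * A * Wᴴ, ?_, ?_⟩
    · rw [hYH, key A Aᴴ, key Aᴴ A, key (A * Aᴴ) (Aᴴ * A), key (Aᴴ * A) (A * Aᴴ), hAcomm]
    · rw [hYH, key A Aᴴ, key Aᴴ A, ← Matrix.sub_mul, ← Matrix.mul_sub, hAdiff]
      exact hXW
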